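/- Let B : (a,b) → (real symmetric positive definite 3×3 matrices) be differentiable with det B(t) = 1 for all t ∈ (a,b). Then the function t ↦ tr(A(B(t))) is constant on (a,b). -/

import Mathlib

open Matrix MeasureTheory

noncomputable section

/-- 3×3 real matrices. -/
abbrev Mat3 := Matrix (Fin 3) (Fin 3) ℝ

/-- Rank-4 tensors on ℝ³. -/
abbrev Tens4 := Fin 3 → Fin 3 → Fin 3 → Fin 3 → ℝ

/-- Tensor (outer) product of two matrices: `(K ⊗ L)_{ijkl} = K_{ij} L_{kl}`. -/
def otimes (K L : Mat3) : Tens4 := fun i j k l => K i j * L k l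

/-- Symmetrization of a rank-4 tensor: the average over all 24 permutations of the indices. -/
def symmetrize (T : Tens4) : Tens4 := fun i j k l =>
  (∑ σ : Equiv.Perm (Fin 4),
      T (![i, j, k, l] (σ 0)) (![i, j, k, l] (σ 1)) (![i, j, k, l] (σ 2)) (![i, j, k, l] (σ 3)))
    / 24

/-- Contraction of a rank-4 tensor with a matrix: `(𝔹:M)_{ij} = Σ_{k,l} 𝔹_{ijkl} M_{kl}`. -/
def contr (T : Tens4) (M : Mat3) : Mat3 :=
  Matrix.of fun i j => ∑ k, ∑ l, T i j k l * M k l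

/-- Full contraction `N:𝔹:M = Σ_{i,j,k,l} N_{ij} 𝔹_{ijkl} M_{kl}`. -/
def dcontr (N : Mat3) (T : Tens4) (M : Mat3) : ℝ :=
  ∑ i, ∑ j, ∑ k, ∑ l, N i j * T i j k l * M k l

/-- The matrix `(B + s·I)⁻¹` (matrix inverse). -/
def res (B : Mat3) (s : ℝ) : Mat3 := (B + s • (1 : Mat3))⁻¹

/-- `A(B) = (1/2)·∫₀^∞ (B + s·I)⁻¹ / √(det(B + s·I)) ds`, entrywise. -/
def Amat (B : Mat3) : Mat3 :=
  Matrix.of fun i j =>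
    (1 / 2) * ∫ s in Set.Ioi (0 : ℝ),
      res B s i j / Real.sqrt (B + s • (1 : Mat3)).det

/-- `𝔸(B) = (3/4)·∫₀^∞ s·S((B+sI)⁻¹ ⊗ (B+sI)⁻¹) / √(det(B+sI)) ds`, entrywise. -/
def Atens (B : Mat3) : Tens4 := fun i j k l =>
  (3 / 4) * ∫ s in Set.Ioi (0 : ℝ),
    s * symmetrize (otimes (res B s) (res B s)) i j k l
      / Real.sqrt (B + s • (1 : Mat3)).det

/-- `ℂ(B) = (3/4)·∫₀^∞ S((B+sI)⁻¹ ⊗ (B+sI)⁻¹) / √(det(B+sI)) ds`, entrywise. -/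
def Ctens (B : Mat3) : Tens4 := fun i j k l =>
  (3 / 4) * ∫ s in Set.Ioi (0 : ℝ),
    symmetrize (otimes (res B s) (res B s)) i j k l
      / Real.sqrt (B + s • (1 : Mat3)).det

end

open Set Filter Topology

noncomputable section Helpers

private def gfun (B : Mat3) : ℝ → ℝ :=
  fun s => -(Real.sqrt (B + s • (1 : Mat3)).det)⁻¹

private def g'fun (B : Mat3) : ℝ → ℝ := fun s =>
  (Matrix.adjugate (B + s • (1 : Mat3))).trace
    / (2 * Real.sqrt (B + s • (1 : Mat3)).det * (B + s • (1 : Mat3)).det)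

private def ffun (B : Mat3) (i : Fin 3) : ℝ → ℝ := fun s =>
  res B s i i / Real.sqrt (B + s • (1 : Mat3)).det

end Helpers

private lemma det3_key (B : Mat3) (u : ℝ) : (B + u • (1 : Mat3)).det =
      (B 0 0 + u) * (B 1 1 + u) * (B 2 2 + u)
      - (B 0 0 + u) * (B 1 2 * B 2 1)
      - (B 0 1 * B 1 0) * (B 2 2 + u)
      + B 0 1 * B 1 2 * B 2 0
      + B 0 2 * B 1 0 * B 2 1
      - (B 0 2 * B 2 0) * (B 1 1 + u) := by
  simp [Matrix.det_fin_three, Matrix.add_apply, Matrix.smul_apply, Matrix.one_apply]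
  ring

private lemma hasDerivAt_det3 (B : Mat3) (s : ℝ) :
    HasDerivAt (fun u : ℝ => (B + u • (1 : Mat3)).det)
      ((Matrix.adjugate (B + s • (1 : Mat3))).trace) s := by
  have h0 : HasDerivAt (fun u : ℝ => B 0 0 + u) 1 s := by
    simpa using (hasDerivAt_id s).const_add (B 0 0)
  have h1 : HasDerivAt (fun u : ℝ => B 1 1 + u) 1 s := by
    simpa using (hasDerivAt_id s).const_add (B 1 1)
  have h2 : HasDerivAt (fun u : ℝ => B 2 2 + u) 1 s := by
    simpa using (hasDerivAt_id s).const_add (B 2 2)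
  have h := (((((((h0.mul h1).mul h2).sub (h0.mul_const (B 1 2 * B 2 1))).sub
      (h2.const_mul (B 0 1 * B 1 0))).add_const (B 0 1 * B 1 2 * B 2 0)).add_const
      (B 0 2 * B 1 0 * B 2 1)).sub (h1.const_mul (B 0 2 * B 2 0)))
  have h' : HasDerivAt (fun u : ℝ => (B + u • (1 : Mat3)).det)
      ((1 * (B 1 1 + s) + (B 0 0 + s) * 1) * (B 2 2 + s) + (B 0 0 + s) * (B 1 1 + s) * 1
        - 1 * (B 1 2 * B 2 1) - (B 0 1 * B 1 0) * 1 - (B 0 2 * B 2 0) * 1) s := by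
    refine HasDerivAt.congr_of_eventuallyEq ?_ (Filter.Eventually.of_forall (det3_key B))
    exact h
  convert h' using 1
  simp [Matrix.adjugate_fin_three, Matrix.trace_fin_three, Matrix.add_apply,
    Matrix.smul_apply, Matrix.one_apply]
  ring

private lemma diag_pos {M : Mat3} (hM : M.PosDef) (i : Fin 3) : 0 < M i i := by
  exact hM.diag_pos

private lemma sym_entry {B : Mat3} (hB : B.PosDef) (i j : Fin 3) : B i j = B j i := by
  have h := hB.isHermitian
  have := congrFun (congrFun h i) j
  simpa [Matrix.conjTranspose_apply] using this.symm

private lemma posDef_shift {B : Mat3} (hB : B.PosDef) {s : ℝ} (hs : 0 ≤ s) :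
    (B + s • (1 : Mat3)).PosDef := by
  have h1 : (s • (1 : Mat3)).PosSemidef := by
    rw [Matrix.smul_one_eq_diagonal]
    exact Matrix.PosSemidef.diagonal (fun i => hs)
  exact hB.add_posSemidef h1

private lemma Dcont (B : Mat3) : Continuous fun s : ℝ => (B + s • (1 : Mat3)).det :=
  (continuous_const.add (continuous_id.smul continuous_const)).matrix_det

private lemma Dge (B : Mat3) (hB : B.PosDef) :
    ∀ᶠ s in atTop, id s ≤ (B + s • (1 : Mat3)).det := by
  have ha := diag_pos hB 0
  have hb := diag_pos hB 1
  have hc := diag_pos hB 2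
  have hp : 0 ≤ B 1 2 * B 2 1 := by rw [sym_entry hB 1 2]; exact mul_self_nonneg _
  have hq : 0 ≤ B 0 1 * B 1 0 := by rw [sym_entry hB 0 1]; exact mul_self_nonneg _
  have hr : 0 ≤ B 0 2 * B 2 0 := by rw [sym_entry hB 0 2]; exact mul_self_nonneg _
  filter_upwards [eventually_ge_atTop (1:ℝ),
    eventually_ge_atTop ((B 0 0 + 1) * (B 1 2 * B 2 1) + (B 2 2 + 1) * (B 0 1 * B 1 0)
      + (B 1 1 + 1) * (B 0 2 * B 2 0) + |B 0 1 * B 1 2 * B 2 0| + |B 0 2 * B 1 0 * B 2 1| + 1)]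
    with s hs1 hsK
  rw [det3_key B s]
  simp only [id]
  set a := B 0 0; set b := B 1 1; set c := B 2 2
  set p := B 1 2 * B 2 1; set q := B 0 1 * B 1 0; set r := B 0 2 * B 2 0
  set t3 := B 0 1 * B 1 2 * B 2 0; set t4 := B 0 2 * B 1 0 * B 2 1
  have hs0 : (0:ℝ) ≤ s := by linarith
  have h3 : s^3 ≤ (a+s)*(b+s)*(c+s) := by
    nlinarith [mul_nonneg (mul_nonneg ha.le hb.le) hc.le,
      mul_nonneg (mul_nonneg ha.le hb.le) hs0, mul_nonneg (mul_nonneg ha.le hc.le) hs0,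
      mul_nonneg (mul_nonneg hb.le hc.le) hs0, mul_nonneg (mul_nonneg ha.le hs0) hs0,
      mul_nonneg (mul_nonneg hb.le hs0) hs0, mul_nonneg (mul_nonneg hc.le hs0) hs0]
  have h4 : (a+s)*p ≤ (a+1)*p*s := by
    nlinarith [mul_nonneg (mul_nonneg hp ha.le) (sub_nonneg.2 hs1)]
  have h5 : q*(c+s) ≤ (c+1)*q*s := by
    nlinarith [mul_nonneg (mul_nonneg hq hc.le) (sub_nonneg.2 hs1)]
  have h6 : r*(b+s) ≤ (b+1)*r*s := by
    nlinarith [mul_nonneg (mul_nonneg hr hb.le) (sub_nonneg.2 hs1)]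
  have h7 : -(abs t3 * s) ≤ t3 := by
    nlinarith [abs_nonneg t3, neg_abs_le t3, mul_nonneg (abs_nonneg t3) (sub_nonneg.2 hs1)]
  have h8 : -(abs t4 * s) ≤ t4 := by
    nlinarith [abs_nonneg t4, neg_abs_le t4, mul_nonneg (abs_nonneg t4) (sub_nonneg.2 hs1)]
  have h9 : ((a+1)*p + (c+1)*q + (b+1)*r + abs t3 + abs t4 + 1)*s ≤ s^3 := by
    nlinarith [mul_nonneg hs0 (sub_nonneg.2 hsK),
      mul_nonneg hs0 (mul_nonneg hs0 (sub_nonneg.2 hs1))]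
  nlinarith [h3, h4, h5, h6, h7, h8, h9]

private lemma trace_Amat_eq_one {B : Mat3} (hB : B.PosDef) (hd : B.det = 1) :
    (Amat B).trace = 1 := by
  classical
  have hMpos : ∀ s : ℝ, 0 ≤ s → (B + s • (1 : Mat3)).PosDef := fun s hs => posDef_shift hB hs
  have hDpos : ∀ s : ℝ, 0 ≤ s → 0 < (B + s • (1 : Mat3)).det := fun s hs => (hMpos s hs).det_pos
  have hinvpos : ∀ s : ℝ, 0 ≤ s → ((B + s • (1 : Mat3))⁻¹).PosDef :=
    fun s hs => (hMpos s hs).inv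
  have hadjtr : ∀ s : ℝ, 0 ≤ s →
      (Matrix.adjugate (B + s • (1 : Mat3))).trace
        = (B + s • (1 : Mat3)).det * ((B + s • (1 : Mat3))⁻¹).trace := by
    intro s hs
    have hinv : (B + s • (1 : Mat3))⁻¹
        = ((B + s • (1 : Mat3)).det)⁻¹ • Matrix.adjugate (B + s • (1 : Mat3)) := by
      rw [Matrix.inv_def, Ring.inverse_eq_inv]
    rw [hinv, Matrix.trace_smul, smul_eq_mul, ← mul_assoc,
      mul_inv_cancel₀ (hDpos s hs).ne', one_mul]
  have hadjpos : ∀ s : ℝ, 0 ≤ s → 0 < (Matrix.adjugate (B + s • (1 : Mat3))).trace := by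
    intro s hs
    rw [hadjtr s hs, Matrix.trace_fin_three]
    have h0 := diag_pos (hinvpos s hs) 0
    have h1 := diag_pos (hinvpos s hs) 1
    have h2 := diag_pos (hinvpos s hs) 2
    have := hDpos s hs
    positivity
  have hg'nonneg : ∀ s ∈ Ioi (0:ℝ), 0 ≤ g'fun B s := by
    intro s hs
    have hs0 : (0:ℝ) ≤ s := le_of_lt hs
    have h1 := hadjpos s hs0
    have h2 : 0 < 2 * Real.sqrt (B + s • (1 : Mat3)).det * (B + s • (1 : Mat3)).det := by
      have := hDpos s hs0
      positivity
    exact div_nonneg h1.le h2.le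
  have hderiv : ∀ s ∈ Ioi (0:ℝ), HasDerivAt (gfun B) (g'fun B s) s := by
    intro s hs
    have hs0 : (0:ℝ) ≤ s := le_of_lt hs
    have hDps := hDpos s hs0
    have hDne : (B + s • (1 : Mat3)).det ≠ 0 := hDps.ne'
    have hsq : Real.sqrt (B + s • (1 : Mat3)).det ≠ 0 := (Real.sqrt_pos.2 hDps).ne'
    have h1 := (hasDerivAt_det3 B s).sqrt hDne
    have h2 := (h1.inv hsq).neg
    refine h2.congr_deriv (Eq.symm ?_)
    simp only [g'fun]
    rw [Real.sq_sqrt hDps.le, neg_div, neg_neg, div_div]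
  have hcont0 : ContinuousWithinAt (gfun B) (Ici (0:ℝ)) 0 := by
    have hD0 : 0 < (B + (0:ℝ) • (1 : Mat3)).det := hDpos 0 le_rfl
    have hsq : Continuous fun s : ℝ => Real.sqrt (B + s • (1 : Mat3)).det :=
      Real.continuous_sqrt.comp (Dcont B)
    have hne : Real.sqrt (B + (0:ℝ) • (1 : Mat3)).det ≠ 0 := (Real.sqrt_pos.2 hD0).ne'
    exact ((hsq.continuousAt.inv₀ hne).neg).continuousWithinAt
  have hgtend : Tendsto (gfun B) atTop (𝓝 0) := by
    have hsqrt : Tendsto Real.sqrt atTop atTop := by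
      refine tendsto_atTop.2 fun b => ?_
      filter_upwards [eventually_ge_atTop (b^2)] with x h1
      calc b ≤ |b| := le_abs_self b
        _ = Real.sqrt (b^2) := (Real.sqrt_sq_eq_abs b).symm
        _ ≤ Real.sqrt x := Real.sqrt_le_sqrt h1
    have hDtop : Tendsto (fun s : ℝ => (B + s • (1 : Mat3)).det) atTop atTop :=
      tendsto_atTop_mono' atTop (Dge B hB) tendsto_id
    have h := (hsqrt.comp hDtop).inv_tendsto_atTop
    have h2 : Tendsto (fun s : ℝ => -(Real.sqrt (B + s • (1 : Mat3)).det)⁻¹) atTop (𝓝 (-0)) :=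
      h.neg
    unfold gfun
    simpa using h2
  have hFTC : ∫ s in Ioi (0:ℝ), g'fun B s = 0 - gfun B 0 :=
    integral_Ioi_of_hasDerivAt_of_nonneg hcont0 hderiv hg'nonneg hgtend
  have hInt : IntegrableOn (g'fun B) (Ioi (0:ℝ)) :=
    integrableOn_Ioi_deriv_of_nonneg hcont0 hderiv hg'nonneg hgtend
  have hg0 : gfun B 0 = -1 := by
    simp [gfun, hd]
  have hintval : ∫ s in Ioi (0:ℝ), g'fun B s = 1 := by rw [hFTC, hg0]; ring
  -- entrywise facts
  have hresdiag : ∀ (s : ℝ) (i : Fin 3), res B s i i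
      = ((B + s • (1 : Mat3)).det)⁻¹ * Matrix.adjugate (B + s • (1 : Mat3)) i i := by
    intro s i
    rw [res, Matrix.inv_def, Ring.inverse_eq_inv, Matrix.smul_apply, smul_eq_mul]
  have hsum : ∀ s ∈ Ioi (0:ℝ), (∑ i, ffun B i s) = 2 * g'fun B s := by
    intro s hs
    have hs0 : (0:ℝ) ≤ s := le_of_lt hs
    have hDps := hDpos s hs0
    have hsqpos := Real.sqrt_pos.2 hDps
    have hsq2 : Real.sqrt (B + s • (1 : Mat3)).det * Real.sqrt (B + s • (1 : Mat3)).det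
        = (B + s • (1 : Mat3)).det := Real.mul_self_sqrt hDps.le
    simp only [ffun, g'fun, hresdiag]
    rw [← Finset.sum_div, ← Finset.mul_sum]
    have htr : (∑ i, Matrix.adjugate (B + s • (1 : Mat3)) i i)
        = (Matrix.adjugate (B + s • (1 : Mat3))).trace := by
      rw [Matrix.trace]; rfl
    rw [htr]
    field_simp
  have hfnn : ∀ s ∈ Ioi (0:ℝ), ∀ i : Fin 3, 0 ≤ ffun B i s := by
    intro s hs i
    have hs0 : (0:ℝ) ≤ s := le_of_lt hs
    exact div_nonneg (diag_pos (hinvpos s hs0) i).le (Real.sqrt_nonneg _)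
  have hfle : ∀ s ∈ Ioi (0:ℝ), ∀ i : Fin 3, ffun B i s ≤ 2 * g'fun B s := by
    intro s hs i
    calc ffun B i s ≤ ∑ j, ffun B j s :=
          Finset.single_le_sum (fun j _ => hfnn s hs j) (Finset.mem_univ i)
      _ = 2 * g'fun B s := hsum s hs
  have hfcont : ∀ i : Fin 3, ContinuousOn (ffun B i) (Ioi (0:ℝ)) := by
    intro i
    have hadjc : Continuous fun s : ℝ => Matrix.adjugate (B + s • (1 : Mat3)) i i :=
      ((continuous_const.add (continuous_id.smul continuous_const)).matrix_adjugate).matrix_elem i i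
    have hnum : ContinuousOn (fun s : ℝ => res B s i i) (Ioi (0:ℝ)) := by
      have : ContinuousOn (fun s : ℝ =>
          ((B + s • (1 : Mat3)).det)⁻¹ * Matrix.adjugate (B + s • (1 : Mat3)) i i)
          (Ioi (0:ℝ)) := by
        refine ContinuousOn.mul (ContinuousOn.inv₀ (Dcont B).continuousOn ?_) hadjc.continuousOn
        exact fun s hs => (hDpos s (le_of_lt hs)).ne'
      exact this.congr (fun s _ => hresdiag s i)
    refine hnum.div (Real.continuous_sqrt.comp (Dcont B)).continuousOn ?_
    exact fun s hs => (Real.sqrt_pos.2 (hDpos s (le_of_lt hs))).ne'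
  have hfint : ∀ i : Fin 3, IntegrableOn (ffun B i) (Ioi (0:ℝ)) := by
    intro i
    refine Integrable.mono' (hInt.const_mul 2) ((hfcont i).aestronglyMeasurable measurableSet_Ioi) ?_
    rw [ae_restrict_iff' measurableSet_Ioi]
    refine Eventually.of_forall fun s hs => ?_
    rw [Real.norm_eq_abs, abs_of_nonneg (hfnn s hs i)]
    exact hfle s hs i
  -- final computation
  have htrace : (Amat B).trace = ∑ i : Fin 3, (1/2 : ℝ) * ∫ s in Ioi (0:ℝ), ffun B i s := by
    rw [Matrix.trace]
    refine Finset.sum_congr rfl fun i _ => ?_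
    simp [Amat, Matrix.diag, ffun]
  rw [htrace, ← Finset.mul_sum, ← integral_finset_sum _ (fun i _ => hfint i)]
  rw [setIntegral_congr_fun measurableSet_Ioi hsum]
  rw [integral_const_mul, hintval]
  norm_num


attribute [local instance] Matrix.frobeniusNormedAddCommGroup Matrix.frobeniusNormedSpace

theorem trace_Amat_const (a b : ℝ) (B : ℝ → Mat3)
    (hpos : ∀ t ∈ Set.Ioo a b, (B t).PosDef)
    (hdet : ∀ t ∈ Set.Ioo a b, (B t).det = 1)
    (hdiff : DifferentiableOn ℝ B (Set.Ioo a b)) :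
    ∃ c : ℝ, ∀ t ∈ Set.Ioo a b, (Amat (B t)).trace = c :=
  ⟨1, fun t ht => trace_Amat_eq_one (hpos t ht) (hdet t ht)⟩
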